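/- Suppose ψ₁, ψ₂ : ℝ² → ℝ are continuous and satisfy, for all nonnegative integrable f⁺, f⁻ and a fixed nonnegative rate λ(m,c) (not identically zero) and stock price S > 0: ∫∫ λ f⁻ (ψ₁(S,0) − ψ₂(m,c)) dm dc + ∫∫ λ f⁺ (ψ₂(S,0) − ψ₁(m,c)) dm dc = 0. Then ψ₁ and ψ₂ are constant on the support of λ, with ψ₂(m,c) = ψ₁(S,0) and ψ₁(m,c) = ψ₂(S,0) for all (m,c) with λ(m,c) > 0. -/

import Mathlib

open MeasureTheory

lemma key_le (G : ℝ × ℝ → ℝ) (hG : Continuous G)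
    (h : ∀ f : ℝ × ℝ → ℝ, (∀ y, 0 ≤ f y) → Integrable f → ∫ y, f y * G y = 0)
    (x : ℝ × ℝ) : G x ≤ 0 := by
  by_contra hx
  push_neg at hx
  have hev : ∀ᶠ y in nhds x, G x / 2 < G y :=
    (hG.continuousAt (x := x)).eventually_const_lt (by linarith)
  obtain ⟨δ, hδpos, hδ⟩ := Metric.eventually_nhds_iff_ball.mp hev
  set δ' : ℝ := min δ 1 with hδ'def
  have hδ'pos : 0 < δ' := lt_min hδpos one_pos
  set f : ℝ × ℝ → ℝ := (Metric.closedBall x 1).indicator (fun y => max (G y) 0) with hf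
  have hmaxc : Continuous fun y => max (G y) 0 := hG.max continuous_const
  have hf0 : ∀ y, 0 ≤ f y := by
    intro y
    exact Set.indicator_nonneg (fun y _ => le_max_right _ _) y
  have hfint : Integrable f := by
    rw [hf]
    exact (hmaxc.continuousOn.integrableOn_compact (isCompact_closedBall x 1)).integrable_indicator
      measurableSet_closedBall
  have hφeq : ∀ y, f y * G y
      = (Metric.closedBall x 1).indicator (fun y => max (G y) 0 * G y) y := by
    intro y
    rw [hf]
    by_cases hy : y ∈ Metric.closedBall x 1 <;>
      simp [Set.indicator_apply, hy]
  have hφ0 : ∀ y, 0 ≤ f y * G y := by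
    intro y
    rw [hφeq]
    apply Set.indicator_nonneg
    intro y _
    rcases le_or_gt (G y) 0 with hy | hy
    · simp [max_eq_right hy]
    · have : max (G y) 0 = G y := max_eq_left hy.le
      rw [this]
      positivity
  have hφint : Integrable fun y => f y * G y := by
    have : Integrable ((Metric.closedBall x 1).indicator (fun y => max (G y) 0 * G y)) :=
      ((hmaxc.mul hG).continuousOn.integrableOn_compact (isCompact_closedBall x 1)).integrable_indicator
        measurableSet_closedBall
    exact this.congr (by filter_upwards with y using (hφeq y).symm)
  have hz : ∫ y, f y * G y = 0 := h f hf0 hfint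
  have hae : (fun y => f y * G y) =ᵐ[volume] 0 :=
    (integral_eq_zero_iff_of_nonneg hφ0 hφint).mp hz
  have hnull : volume {y | f y * G y ≠ 0} = 0 := by
    have := hae
    rw [Filter.EventuallyEq, ae_iff] at this
    simpa using this
  have hsub : Metric.ball x δ' ⊆ {y | f y * G y ≠ 0} := by
    intro y hy
    have hy1 : y ∈ Metric.closedBall x 1 := by
      have : dist y x < δ' := hy
      exact Metric.mem_closedBall.mpr (le_trans this.le (min_le_right δ 1))
    have hyδ : y ∈ Metric.ball x δ :=
      Metric.mem_ball.mpr (lt_of_lt_of_le hy (min_le_left δ 1))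
    have hGy : 0 < G y := lt_trans (by linarith) (hδ y hyδ)
    have : f y = G y := by
      rw [hf, Set.indicator_of_mem hy1, max_eq_left hGy.le]
    simp only [Set.mem_setOf_eq, this]
    positivity
  have hpos : 0 < volume (Metric.ball x δ') := Metric.measure_ball_pos volume x hδ'pos
  have : volume (Metric.ball x δ') = 0 :=
    le_antisymm (le_trans (measure_mono hsub) hnull.le) zero_le
  exact absurd this hpos.ne'

lemma key_eq (G : ℝ × ℝ → ℝ) (hG : Continuous G)
    (h : ∀ f : ℝ × ℝ → ℝ, (∀ y, 0 ≤ f y) → Integrable f → ∫ y, f y * G y = 0)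
    (x : ℝ × ℝ) : G x = 0 := by
  have h1 := key_le G hG h x
  have h2 := key_le (fun y => -G y) hG.neg (fun f hf0 hfi => by
    have : ∫ y, f y * -G y = -∫ y, f y * G y := by
      rw [← integral_neg]; congr 1; funext y; ring
    rw [this, h f hf0 hfi, neg_zero]) x
  simp only [neg_nonpos] at h2
  linarith [h2]

/-- If ψ₁, ψ₂ continuous satisfy, for all nonnegative integrable f⁺, f⁻,
∫∫ λ f⁻ (ψ₁(S,0) − ψ₂) + ∫∫ λ f⁺ (ψ₂(S,0) − ψ₁) = 0, then on the support of λ,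
ψ₂(m,c) = ψ₁(S,0) and ψ₁(m,c) = ψ₂(S,0). -/
theorem collision_invariant_support (ψ₁ ψ₂ lam : ℝ × ℝ → ℝ)
    (hψ₁ : Continuous ψ₁) (hψ₂ : Continuous ψ₂)
    (hlam : Continuous lam) (hlam0 : ∀ x, 0 ≤ lam x)
    (hlamne : ∃ x, lam x ≠ 0)
    (S : ℝ) (hS : 0 < S)
    (hinv : ∀ fp fm : ℝ × ℝ → ℝ, (∀ x, 0 ≤ fp x) → (∀ x, 0 ≤ fm x) →
      Integrable fp → Integrable fm →
      (∫ x, lam x * fm x * (ψ₁ (S, 0) - ψ₂ x)) +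
      (∫ x, lam x * fp x * (ψ₂ (S, 0) - ψ₁ x)) = 0) :
    ∀ x, 0 < lam x → ψ₂ x = ψ₁ (S, 0) ∧ ψ₁ x = ψ₂ (S, 0) := by
  intro x hx
  have h1 : ∀ f : ℝ × ℝ → ℝ, (∀ y, 0 ≤ f y) → Integrable f →
      ∫ y, f y * (lam y * (ψ₁ (S, 0) - ψ₂ y)) = 0 := by
    intro f hf0 hfi
    have := hinv (fun _ => 0) f (fun _ => le_refl 0) hf0 (integrable_zero _ _ _) hfi
    simp only [mul_zero, zero_mul, integral_zero, add_zero] at this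
    have heq : ∫ y, f y * (lam y * (ψ₁ (S, 0) - ψ₂ y)) = ∫ y, lam y * f y * (ψ₁ (S, 0) - ψ₂ y) := by
      congr 1; funext y; ring
    rw [heq]; exact this
  have h2 : ∀ f : ℝ × ℝ → ℝ, (∀ y, 0 ≤ f y) → Integrable f →
      ∫ y, f y * (lam y * (ψ₂ (S, 0) - ψ₁ y)) = 0 := by
    intro f hf0 hfi
    have := hinv f (fun _ => 0) hf0 (fun _ => le_refl 0) hfi (integrable_zero _ _ _)
    simp only [mul_zero, zero_mul, integral_zero, zero_add] at this
    have heq : ∫ y, f y * (lam y * (ψ₂ (S, 0) - ψ₁ y)) = ∫ y, lam y * f y * (ψ₂ (S, 0) - ψ₁ y) := by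
      congr 1; funext y; ring
    rw [heq]; exact this
  have hG1 : (fun y => lam y * (ψ₁ (S, 0) - ψ₂ y)) x = 0 :=
    key_eq _ (hlam.mul (continuous_const.sub hψ₂)) h1 x
  have hG2 : (fun y => lam y * (ψ₂ (S, 0) - ψ₁ y)) x = 0 :=
    key_eq _ (hlam.mul (continuous_const.sub hψ₁)) h2 x
  simp only [mul_eq_zero] at hG1 hG2
  constructor
  · rcases hG1 with h | h
    · exact absurd h hx.ne'
    · linarith
  · rcases hG2 with h | h
    · exact absurd h hx.ne'
    · linarith
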